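/- Let a : ℝ → ℝ be analytic and non-polynomial, and let x₁, ..., xₘ be real numbers with 0 < |x₁| < |x₂| < ... < |xₘ|. Then for all but countably many γ ∈ [0,1], the real numbers a(γx₁), ..., a(γxₘ) are linearly independent over ℚ. -/

import Mathlib

open Filter Topology

theorem stmt_7 (a : ℝ → ℝ) (ha : ∀ x : ℝ, AnalyticAt ℝ a x)
    (hnp : ¬ ∃ p : Polynomial ℝ, ∀ x : ℝ, a x = p.eval x)
    (m : ℕ) (hm : 0 < m) (x : Fin m → ℝ)
    (h0 : 0 < |x ⟨0, hm⟩|) (hmono : StrictMono fun i => |x i|) :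
    {γ ∈ Set.Icc (0:ℝ) 1 |
      ∃ l : Fin m → ℚ, l ≠ 0 ∧ ∑ i, (l i : ℝ) * a (γ * x i) = 0}.Countable := by
  have key : ∀ l : Fin m → ℚ, l ≠ 0 →
      {γ ∈ Set.Icc (0:ℝ) 1 | ∑ i, (l i : ℝ) * a (γ * x i) = 0}.Countable := by
    intro l hl
    set f : ℝ → ℝ := fun γ => ∑ i, (l i : ℝ) * a (γ * x i) with hfdef
    have hfa : ∀ γ : ℝ, AnalyticAt ℝ f γ := by
      intro γ
      apply Finset.analyticAt_fun_sum
      intro i _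
      have hin : AnalyticAt ℝ (fun t : ℝ => t * x i) γ := analyticAt_id.mul analyticAt_const
      exact analyticAt_const.mul
        ((AnalyticAt.comp (f := fun t : ℝ => t * x i) (x := γ) (ha (γ * x i)) hin))
    by_cases hz : ∀ γ : ℝ, f γ = 0
    · exfalso
      -- the hard case: f identically zero forces a to be a polynomial
      obtain ⟨i₀, hi₀⟩ := Function.ne_iff.mp hl
      have hne : (Finset.univ.filter fun i => l i ≠ 0).Nonempty :=
        ⟨i₀, by simpa using hi₀⟩
      set j := (Finset.univ.filter fun i => l i ≠ 0).max' hne with hjdef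
      have hj : l j ≠ 0 := by
        have := (Finset.univ.filter fun i => l i ≠ 0).max'_mem hne
        simpa using this
      have hmax : ∀ i, l i ≠ 0 → i ≤ j := fun i hi =>
        Finset.le_max' _ _ (by simp [hi])
      have hxj : x j ≠ 0 := by
        have h1 : |x ⟨0, hm⟩| ≤ |x j| := hmono.monotone (Fin.le_def.mpr (Nat.zero_le _))
        have : 0 < |x j| := lt_of_lt_of_le h0 h1
        exact abs_ne_zero.mp this.ne'
      -- the combination T n tends to l j ≠ 0
      have hT : Tendsto (fun n : ℕ => ∑ i, (l i : ℝ) * (x i / x j) ^ n) atTop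
          (𝓝 (∑ i : Fin m, if i = j then (l j : ℝ) else 0)) := by
        apply tendsto_finset_sum
        intro i _
        by_cases hij : i = j
        · subst hij
          simp only [div_self hxj, one_pow, mul_one, if_pos rfl]
          exact tendsto_const_nhds
        · rw [if_neg hij]
          by_cases hli : l i = 0
          · simp [hli]
          · have hij' : i < j := lt_of_le_of_ne (hmax i hli) hij
            have habs : |x i / x j| < 1 := by
              rw [abs_div, div_lt_one (abs_pos.mpr hxj)]
              exact hmono hij'
            have := (tendsto_pow_atTop_nhds_zero_of_abs_lt_one habs).const_mul ((l i : ℝ))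
            simpa using this
      have hTval : (∑ i : Fin m, if i = j then (l j : ℝ) else 0) = (l j : ℝ) := by
        simp
      rw [hTval] at hT
      have hlj : (l j : ℝ) ≠ 0 := by exact_mod_cast hj
      obtain ⟨N, hN⟩ := eventually_atTop.mp (hT.eventually_ne hlj)
      -- power series of a at 0
      obtain ⟨p, hp⟩ := ha 0
      have hsum : ∀ᶠ z in 𝓝 (0:ℝ), HasSum (fun n => z ^ n • p.coeff n) (a z) := by
        have := hasFPowerSeriesAt_iff.mp hp
        simpa using this
      obtain ⟨ε, hε, hball⟩ := Metric.eventually_nhds_iff.mp hsum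
      -- bound on the x i
      obtain ⟨K, hK1, hKb⟩ : ∃ K : ℝ, 1 ≤ K ∧ ∀ i, |x i| ≤ K := by
        refine ⟨|x ⟨m - 1, Nat.sub_lt hm one_pos⟩| + 1,
          le_add_of_nonneg_left (abs_nonneg _), fun i => ?_⟩
        have : |x i| ≤ |x ⟨m - 1, Nat.sub_lt hm one_pos⟩| := by
          apply hmono.monotone
          exact Fin.le_def.mpr (Nat.le_sub_one_of_lt i.isLt)
        linarith
      have hKpos : (0:ℝ) < K := lt_of_lt_of_le one_pos hK1
      -- power series of f at 0
      set q : FormalMultilinearSeries ℝ ℝ ℝ :=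
        FormalMultilinearSeries.ofScalars ℝ
          (fun n => (∑ i, (l i : ℝ) * x i ^ n) * p.coeff n) with hqdef
      have hqcoeff : ∀ n, q.coeff n = (∑ i, (l i : ℝ) * x i ^ n) * p.coeff n := by
        intro n
        have h := FormalMultilinearSeries.ofScalars_apply_eq (𝕜 := ℝ) (E := ℝ)
          (c := fun n => (∑ i, (l i : ℝ) * x i ^ n) * p.coeff n) 1 n
        rw [hqdef]
        show FormalMultilinearSeries.ofScalars ℝ _ n 1 = _
        rw [show ((1 : Fin n → ℝ)) = fun _ => (1:ℝ) from rfl, h]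
        simp
      have hq : HasFPowerSeriesAt f q 0 := by
        rw [hasFPowerSeriesAt_iff]
        rw [Metric.eventually_nhds_iff]
        refine ⟨ε / K, by positivity, fun z hzd => ?_⟩
        have hzK : ∀ i, dist (z * x i) 0 < ε := by
          intro i
          rw [Real.dist_eq, sub_zero, abs_mul]
          calc |z| * |x i| ≤ |z| * K := by
                exact mul_le_mul_of_nonneg_left (hKb i) (abs_nonneg z)
            _ < (ε / K) * K := by
                apply mul_lt_mul_of_pos_right _ hKpos
                simpa [Real.dist_eq] using hzd
            _ = ε := div_mul_cancel₀ ε hKpos.ne'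
        have hsumsi : ∀ i : Fin m, HasSum
            (fun n => (l i : ℝ) * ((z * x i) ^ n • p.coeff n)) ((l i : ℝ) * a (z * x i)) :=
          fun i => (hball (hzK i)).mul_left _
        have htot := hasSum_sum (s := Finset.univ) (f := fun i n => (l i : ℝ) * ((z * x i) ^ n • p.coeff n))
          (a := fun i => (l i : ℝ) * a (z * x i)) (fun i _ => hsumsi i)
        have heq : (fun n => ∑ i, (l i : ℝ) * ((z * x i) ^ n • p.coeff n))
            = fun n => z ^ n • q.coeff n := by
          funext n
          rw [hqcoeff n]
          simp only [smul_eq_mul, mul_pow, Finset.sum_mul, Finset.mul_sum]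
          apply Finset.sum_congr rfl
          intro i _
          ring
        rw [heq] at htot
        simpa [hfdef] using htot
      -- f ≡ 0 gives q = 0, hence the coefficients vanish
      have hq0 : q = 0 := hq.locally_zero_iff.mp (Eventually.of_forall hz)
      have hcoeff0 : ∀ n, (∑ i, (l i : ℝ) * x i ^ n) * p.coeff n = 0 := by
        intro n
        have := FormalMultilinearSeries.ofScalars_series_eq_zero (𝕜 := ℝ) (E := ℝ)
          (c := fun n => (∑ i, (l i : ℝ) * x i ^ n) * p.coeff n)
        rw [← hqdef] at this
        exact congrFun (this.mp hq0) n
      have hpc0 : ∀ n, N ≤ n → p.coeff n = 0 := by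
        intro n hn
        have hS : (∑ i, (l i : ℝ) * x i ^ n)
            = (∑ i, (l i : ℝ) * (x i / x j) ^ n) * x j ^ n := by
          rw [Finset.sum_mul]
          apply Finset.sum_congr rfl
          intro i _
          rw [div_pow, mul_assoc, div_mul_cancel₀ _ (pow_ne_zero n hxj)]
        have hSne : (∑ i, (l i : ℝ) * x i ^ n) ≠ 0 := by
          rw [hS]
          exact mul_ne_zero (hN n hn) (pow_ne_zero n hxj)
        have := hcoeff0 n
        exact (mul_eq_zero.mp this).resolve_left hSne
      -- hence a is a polynomial near 0
      set P : Polynomial ℝ := ∑ n ∈ Finset.range N, Polynomial.C (p.coeff n) * Polynomial.X ^ n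
        with hPdef
      have hPeval : ∀ z : ℝ, P.eval z = ∑ n ∈ Finset.range N, z ^ n * p.coeff n := by
        intro z
        rw [hPdef, Polynomial.eval_finset_sum]
        apply Finset.sum_congr rfl
        intro n _
        rw [Polynomial.eval_mul, Polynomial.eval_C, Polynomial.eval_pow, Polynomial.eval_X,
          mul_comm]
      have haP : ∀ᶠ z in 𝓝 (0:ℝ), a z - P.eval z = 0 := by
        rw [Metric.eventually_nhds_iff]
        refine ⟨ε, hε, fun z hzd => ?_⟩
        have h1 := hball hzd
        have h2 : HasSum (fun n => z ^ n • p.coeff n)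
            (∑ n ∈ Finset.range N, z ^ n • p.coeff n) := by
          apply hasSum_sum_of_ne_finset_zero
          intro n hn
          rw [hpc0 n (by simpa using hn)]
          simp
        have := h1.unique h2
        rw [this, hPeval, sub_eq_zero]
        simp [smul_eq_mul]
      -- identity theorem: a = P everywhere
      have hgan : AnalyticOnNhd ℝ (fun z => a z - P.eval z) Set.univ := by
        intro z _
        exact (ha z).sub (((analyticAt_id (𝕜 := ℝ)).aeval_polynomial P).congr
          (by filter_upwards with w; simp [Polynomial.coe_aeval_eq_eval]) : AnalyticAt ℝ _ z)
      have := hgan.eqOn_zero_of_preconnected_of_eventuallyEq_zero isPreconnected_univ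
        (Set.mem_univ (0:ℝ)) haP
      exact hnp ⟨P, fun z => by
        have h := this (Set.mem_univ z)
        simpa [sub_eq_zero] using h⟩
    · -- f is not identically zero: its zero set in [0,1] is finite
      push_neg at hz
      obtain ⟨γ₀, hγ₀⟩ := hz
      have hcont : Continuous f := by
        apply continuous_finset_sum
        intro i _
        have hac : Continuous a := continuous_iff_continuousAt.mpr fun w => (ha w).continuousAt
        exact continuous_const.mul (hac.comp (continuous_id.mul continuous_const))
      set Z : Set ℝ := Set.Icc 0 1 ∩ {γ | f γ = 0} with hZdef
      have hset : {γ ∈ Set.Icc (0:ℝ) 1 | ∑ i, (l i : ℝ) * a (γ * x i) = 0} = Z := by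
        ext γ
        constructor
        · rintro ⟨h1, h2⟩; exact ⟨h1, h2⟩
        · rintro ⟨h1, h2⟩; exact ⟨h1, h2⟩
      rw [hset]
      have hZcomp : IsCompact Z :=
        isCompact_Icc.inter_right (isClosed_eq hcont continuous_const)
      have hdisc : DiscreteTopology Z := by
        rw [discreteTopology_subtype_iff]
        intro z hzZ
        have hne : ∀ᶠ w in 𝓝[≠] z, f w ≠ 0 := by
          rcases (hfa z).eventually_eq_zero_or_eventually_ne_zero with h | h
          · exfalso
            have hfan : AnalyticOnNhd ℝ f Set.univ := fun w _ => hfa w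
            have hall := hfan.eqOn_zero_of_preconnected_of_eventuallyEq_zero isPreconnected_univ
                (Set.mem_univ z) h
            exact hγ₀ (hall (Set.mem_univ γ₀))
          · exact h
        rw [inf_principal_eq_bot]
        apply Filter.mem_of_superset hne
        intro w hw
        simp only [Set.mem_compl_iff, hZdef, Set.mem_inter_iff, Set.mem_setOf_eq, not_and]
        intro _
        exact hw
      exact (hZcomp.finite (isDiscrete_iff_discreteTopology.mpr hdisc)).countable
  -- assemble: countable union over nonzero rational tuples
  have hsub : {γ ∈ Set.Icc (0:ℝ) 1 |
      ∃ l : Fin m → ℚ, l ≠ 0 ∧ ∑ i, (l i : ℝ) * a (γ * x i) = 0} ⊆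
      ⋃ l : {l : Fin m → ℚ // l ≠ 0},
        {γ ∈ Set.Icc (0:ℝ) 1 | ∑ i, ((l : Fin m → ℚ) i : ℝ) * a (γ * x i) = 0} := by
    rintro γ ⟨hγ, l, hl, hsum⟩
    exact Set.mem_iUnion.mpr ⟨⟨l, hl⟩, hγ, hsum⟩
  exact Set.Countable.mono hsub (Set.countable_iUnion fun l => key l l.2)
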